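/- Domain completeness is preserved by deriving: if a propagator p over Val' is domain complete for a constraint c (i.e., for every domain d' over Val', ⟦p(d')⟧ ⊆ ⟦dom(c ∩ ⟦d'⟧)⟧), then for every view φ the derived propagator φ̂(p) is domain complete for φ⁻(c): for every domain d over Val, ⟦φ̂(p)(d)⟧ ⊆ ⟦dom(φ_Asn ⁻¹' c ∩ ⟦d⟧)⟧. -/
import Mathlib


namespace Stmt5

variable {Var Val Val' : Type*}

/-- The assignment set of a domain. -/
def asn (d : Var → Set Val) : Set (Var → Val) := {a | ∀ x, a x ∈ d x}

/-- A view lifted to assignments. -/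
def lift (φ : Var → Val → Val') (a : Var → Val) : Var → Val' := fun x => φ x (a x)

/-- A view applied to a domain (pointwise image). -/
def img (φ : Var → Val → Val') (d : Var → Set Val) : Var → Set Val' := fun x => φ x '' d x

/-- The inverse of a view applied to a domain (pointwise preimage). -/
def pre (φ : Var → Val → Val') (d : Var → Set Val') : Var → Set Val := fun x => φ x ⁻¹' d x

/-- The derived propagator `φ̂(p) = φ⁻ ∘ p ∘ φ`. -/
def derived (φ : Var → Val → Val') (p : (Var → Set Val') → Var → Set Val')
    (d : Var → Set Val) : Var → Set Val := pre φ (p (img φ d))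

/-- The strongest domain containing a constraint, defined pointwise. -/
def domOf (c : Set (Var → Val)) : Var → Set Val := fun x => {v | ∃ a ∈ c, a x = v}

/-- Domain completeness is preserved by deriving: if a propagator `p` over `Val'` is domain
complete for a constraint `c`, then for every view `φ` the derived propagator `φ̂(p)` is
domain complete for `φ⁻(c)`. -/
theorem derived_domain_complete (φ : Var → Val → Val')
    (hφ : ∀ x, Function.Injective (φ x))
    (p : (Var → Set Val') → Var → Set Val')
    (hcontr : ∀ d x, p d x ⊆ d x)
    (hmono : ∀ d' d : Var → Set Val', (∀ x, d' x ⊆ d x) → ∀ x, p d' x ⊆ p d x)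
    (c : Set (Var → Val'))
    (hcomp : ∀ d' : Var → Set Val', asn (p d') ⊆ asn (domOf (c ∩ asn d'))) :
    ∀ d : Var → Set Val,
      asn (derived φ p d) ⊆ asn (domOf (lift φ ⁻¹' c ∩ asn d)) := by
  intro d a ha x
  have hla : lift φ a ∈ asn (p (img φ d)) := fun y => ha y
  obtain ⟨b, ⟨hbc, hbd⟩, hbx⟩ := hcomp (img φ d) hla x
  choose a' ha'd ha'b using fun y => hbd y
  have hb : b = lift φ a' := by
    funext y; exact (ha'b y).symm
  refine ⟨a', ⟨?_, ha'd⟩, ?_⟩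
  · show lift φ a' ∈ c; rwa [← hb]
  · apply hφ x
    have := hbx
    rw [hb] at this
    exact this

end Stmt5
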